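/- In an odd pizza, a cut C minimizes ‖R(C)‖ over all cuts if and only if for every cyclic interval I with an even number of pieces ending at C, the total size of G(C)-pieces in I is at least the total size of R(C)-pieces in I. -/
import Mathlib

open Finset

/-- Total size of the red pieces `R(C)` of the almost alternating coloring
induced by the cut `C`: piece `i` is red iff `(i - C).val` is even. -/
noncomputable def redSize (n : ℕ) [NeZero n] (s : ZMod n → ℝ) (C : ZMod n) : ℝ :=
  ∑ i : ZMod n, if Even ((i - C).val) then s i else 0

lemma sum_zmod (n : ℕ) [NeZero n] (f : ZMod n → ℝ) :
    ∑ i : ZMod n, f i = ∑ j ∈ Finset.range n, f (j : ZMod n) := by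
  refine Finset.sum_nbij' (fun i => i.val) (fun j => (j : ZMod n)) ?_ ?_ ?_ ?_ ?_
  · intro a _; exact Finset.mem_range.mpr (ZMod.val_lt a)
  · intro a _; exact Finset.mem_univ _
  · intro a _; exact ZMod.natCast_zmod_val a
  · intro a ha; exact ZMod.val_natCast_of_lt (Finset.mem_range.mp ha)
  · intro a _; rw [ZMod.natCast_zmod_val]

lemma redSize_reindex (n : ℕ) [NeZero n] (s : ZMod n → ℝ) (C' : ZMod n)
    (φ : ZMod n → ZMod n) (hφ : Function.Bijective φ) :
    redSize n s C'
      = ∑ j ∈ Finset.range n, if Even ((φ (j : ZMod n) - C').val) then s (φ (j : ZMod n)) else 0 := by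
  unfold redSize
  rw [show (∑ i : ZMod n, if Even ((i - C').val) then s i else 0)
        = ∑ i : ZMod n, (if Even ((φ i - C').val) then s (φ i) else 0) from
      (Fintype.sum_bijective φ hφ _ _ fun x => rfl).symm]
  exact sum_zmod n _

lemma val_sub_cast (n a b : ℕ) [NeZero n] (ha : a < n) (hb : b ≤ n) :
    ((a : ZMod n) - (b : ZMod n)).val = (a + (n - b)) % n := by
  have h : (a : ZMod n) - (b : ZMod n) = ((a + (n - b) : ℕ) : ZMod n) := by
    push_cast [Nat.cast_sub hb]
    rw [ZMod.natCast_self]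
    ring
  rw [h, ZMod.val_natCast]

lemma parityF (n m j : ℕ) [NeZero n] (hn : Odd n) (hme : Even m) (hm : m < n) (hj : j < n) :
    Even (((j : ZMod n) - (m : ZMod n)).val) ↔ ((j < m ∧ ¬ Even j) ∨ (m ≤ j ∧ Even j)) := by
  rw [val_sub_cast n j m hj hm.le]
  rcases Nat.lt_or_ge j m with h | h
  · have h1 : (j + (n - m)) % n = j + (n - m) := Nat.mod_eq_of_lt (by omega)
    rw [h1]; simp only [Nat.even_iff, Nat.odd_iff] at *; omega
  · have h1 : (j + (n - m)) % n = j - m := by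
      rw [show j + (n - m) = (j - m) + n by omega, Nat.add_mod_right]
      exact Nat.mod_eq_of_lt (by omega)
    rw [h1]; simp only [Nat.even_iff, Nat.odd_iff] at *; omega

lemma parityB (n m j : ℕ) [NeZero n] (hn : Odd n) (hme : Even m) (hm : m < n) (hj : j < n) :
    Even (((m : ZMod n) - ((j + 1 : ℕ) : ZMod n)).val) ↔ ((j < m ∧ ¬ Even j) ∨ (m ≤ j ∧ Even j)) := by
  rw [val_sub_cast n m (j + 1) hm (by omega)]
  rcases Nat.lt_or_ge j m with h | h
  · have h1 : (m + (n - (j + 1))) % n = m - 1 - j := by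
      rw [show m + (n - (j + 1)) = (m - 1 - j) + n by omega, Nat.add_mod_right]
      exact Nat.mod_eq_of_lt (by omega)
    rw [h1]; simp only [Nat.even_iff, Nat.odd_iff] at *; omega
  · have h1 : (m + (n - (j + 1))) % n = m + (n - (j + 1)) := Nat.mod_eq_of_lt (by omega)
    rw [h1]; simp only [Nat.even_iff, Nat.odd_iff] at *; omega

lemma core (t : ℕ → ℝ) (m n : ℕ) (hm : m ≤ n) :
    ((∑ j ∈ Finset.range n, if (j < m ∧ ¬ Even j) ∨ (m ≤ j ∧ Even j) then t j else 0)
      + ∑ j ∈ Finset.range m, (if Even j then t j else 0))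
    = (∑ j ∈ Finset.range n, if Even j then t j else 0)
      + ∑ j ∈ Finset.range m, (if Even j then 0 else t j) := by
  have hr : Finset.range m = (Finset.range n).filter (· < m) := by
    ext x; simp; omega
  rw [hr, Finset.sum_filter, Finset.sum_filter,
      ← Finset.sum_add_distrib, ← Finset.sum_add_distrib]
  refine Finset.sum_congr rfl fun j hj => ?_
  simp only [Nat.even_iff]
  split_ifs <;> first | ring1 | (exfalso; omega)

lemma keyF (n : ℕ) [NeZero n] (hn : Odd n) (s : ZMod n → ℝ) (C : ZMod n) (m : ℕ)
    (hm : m < n) (hme : Even m) :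
    redSize n s (C + (m : ZMod n)) + (∑ j ∈ Finset.range m, if Even j then s (C + (j : ZMod n)) else 0)
      = redSize n s C + ∑ j ∈ Finset.range m, if Even j then 0 else s (C + (j : ZMod n)) := by
  have hbij : Function.Bijective (fun i : ZMod n => C + i) := (Equiv.addLeft C).bijective
  rw [redSize_reindex n s (C + m) _ hbij, redSize_reindex n s C _ hbij]
  have e1 : ∀ j ∈ Finset.range n,
      (if Even ((C + (j : ZMod n) - (C + m)).val) then s (C + (j : ZMod n)) else 0)
        = (if (j < m ∧ ¬ Even j) ∨ (m ≤ j ∧ Even j) then s (C + (j : ZMod n)) else 0) := by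
    intro j hj
    have h : C + (j : ZMod n) - (C + m) = (j : ZMod n) - m := by ring
    rw [h]
    exact if_congr (parityF n m j hn hme hm (Finset.mem_range.mp hj)) rfl rfl
  have e2 : ∀ j ∈ Finset.range n,
      (if Even ((C + (j : ZMod n) - C).val) then s (C + (j : ZMod n)) else 0)
        = (if Even j then s (C + (j : ZMod n)) else 0) := by
    intro j hj
    have h : C + (j : ZMod n) - C = (j : ZMod n) := by ring
    rw [h, ZMod.val_natCast_of_lt (Finset.mem_range.mp hj)]
  rw [Finset.sum_congr rfl e1, Finset.sum_congr rfl e2]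
  exact core (fun j => s (C + (j : ZMod n))) m n hm.le

lemma valB (n j : ℕ) [NeZero n] (C : ZMod n) (hj : j < n) :
    (C - 1 - (j : ZMod n) - C).val = n - (j + 1) := by
  have h : C - 1 - (j : ZMod n) - C = ((0 : ℕ) : ZMod n) - ((j + 1 : ℕ) : ZMod n) := by
    push_cast; ring
  rw [h, val_sub_cast n 0 (j + 1) (NeZero.pos n) (by omega), Nat.zero_add]
  exact Nat.mod_eq_of_lt (by omega)

lemma keyB (n : ℕ) [NeZero n] (hn : Odd n) (s : ZMod n → ℝ) (C : ZMod n) (m : ℕ)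
    (hm : m < n) (hme : Even m) :
    redSize n s (C - (m : ZMod n)) + (∑ j ∈ Finset.range m, if Even j then s (C - 1 - (j : ZMod n)) else 0)
      = redSize n s C + ∑ j ∈ Finset.range m, if Even j then 0 else s (C - 1 - (j : ZMod n)) := by
  have hbij : Function.Bijective (fun i : ZMod n => C - 1 - i) := (Equiv.subLeft (C - 1)).bijective
  rw [redSize_reindex n s (C - m) _ hbij, redSize_reindex n s C _ hbij]
  have e1 : ∀ j ∈ Finset.range n,
      (if Even ((C - 1 - (j : ZMod n) - (C - m)).val) then s (C - 1 - (j : ZMod n)) else 0)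
        = (if (j < m ∧ ¬ Even j) ∨ (m ≤ j ∧ Even j) then s (C - 1 - (j : ZMod n)) else 0) := by
    intro j hj
    have h : C - 1 - (j : ZMod n) - (C - m) = (m : ZMod n) - ((j + 1 : ℕ) : ZMod n) := by
      push_cast; ring
    rw [h]
    exact if_congr (parityB n m j hn hme hm (Finset.mem_range.mp hj)) rfl rfl
  have e2 : ∀ j ∈ Finset.range n,
      (if Even ((C - 1 - (j : ZMod n) - C).val) then s (C - 1 - (j : ZMod n)) else 0)
        = (if Even j then s (C - 1 - (j : ZMod n)) else 0) := by
    intro j hj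
    have hj' := Finset.mem_range.mp hj
    rw [valB n j C hj']
    refine if_congr ?_ rfl rfl
    have hn' := Nat.odd_iff.mp hn
    simp only [Nat.even_iff]; omega
  rw [Finset.sum_congr rfl e1, Finset.sum_congr rfl e2]
  exact core (fun j => s (C - 1 - (j : ZMod n))) m n hm.le

lemma sum_image_fwd (n : ℕ) [NeZero n] (m : ℕ) (hm : m ≤ n) (C : ZMod n) (f : ZMod n → ℝ) :
    ∑ i ∈ (Finset.range m).image (fun j : ℕ => C + (j : ZMod n)), f i
      = ∑ j ∈ Finset.range m, f (C + (j : ZMod n)) := by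
  refine Finset.sum_image ?_
  intro x hx y hy hxy
  have h : (x : ZMod n) = (y : ZMod n) := by linear_combination hxy
  have h2 := congrArg ZMod.val h
  rwa [ZMod.val_natCast_of_lt (by have := Finset.mem_range.mp hx; omega),
       ZMod.val_natCast_of_lt (by have := Finset.mem_range.mp hy; omega)] at h2

lemma sum_image_bwd (n : ℕ) [NeZero n] (m : ℕ) (hm : m ≤ n) (C : ZMod n) (f : ZMod n → ℝ) :
    ∑ i ∈ (Finset.range m).image (fun j : ℕ => C - 1 - (j : ZMod n)), f i
      = ∑ j ∈ Finset.range m, f (C - 1 - (j : ZMod n)) := by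
  refine Finset.sum_image ?_
  intro x hx y hy hxy
  have h : (x : ZMod n) = (y : ZMod n) := by linear_combination -hxy
  have h2 := congrArg ZMod.val h
  rwa [ZMod.val_natCast_of_lt (by have := Finset.mem_range.mp hx; omega),
       ZMod.val_natCast_of_lt (by have := Finset.mem_range.mp hy; omega)] at h2

lemma fwdR (n : ℕ) [NeZero n] (m : ℕ) (hm : m ≤ n) (C : ZMod n) (s : ZMod n → ℝ) :
    (∑ i ∈ (Finset.range m).image (fun j : ℕ => C + (j : ZMod n)),
        if Even ((i - C).val) then s i else 0)
      = ∑ j ∈ Finset.range m, if Even j then s (C + (j : ZMod n)) else 0 := by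
  rw [sum_image_fwd n m hm C]
  refine Finset.sum_congr rfl fun j hj => ?_
  have h : C + (j : ZMod n) - C = (j : ZMod n) := by ring
  rw [h, ZMod.val_natCast_of_lt (by have := Finset.mem_range.mp hj; omega)]

lemma fwdG (n : ℕ) [NeZero n] (m : ℕ) (hm : m ≤ n) (C : ZMod n) (s : ZMod n → ℝ) :
    (∑ i ∈ (Finset.range m).image (fun j : ℕ => C + (j : ZMod n)),
        if Even ((i - C).val) then 0 else s i)
      = ∑ j ∈ Finset.range m, if Even j then 0 else s (C + (j : ZMod n)) := by
  rw [sum_image_fwd n m hm C]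
  refine Finset.sum_congr rfl fun j hj => ?_
  have h : C + (j : ZMod n) - C = (j : ZMod n) := by ring
  rw [h, ZMod.val_natCast_of_lt (by have := Finset.mem_range.mp hj; omega)]

lemma bwd_cond (n j : ℕ) [NeZero n] (hn : Odd n) (C : ZMod n) (hj : j < n) :
    Even ((C - 1 - (j : ZMod n) - C).val) ↔ Even j := by
  rw [valB n j C hj]
  have hn' := Nat.odd_iff.mp hn
  simp only [Nat.even_iff]; omega

lemma bwdR (n : ℕ) [NeZero n] (hn : Odd n) (m : ℕ) (hm : m ≤ n) (C : ZMod n) (s : ZMod n → ℝ) :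
    (∑ i ∈ (Finset.range m).image (fun j : ℕ => C - 1 - (j : ZMod n)),
        if Even ((i - C).val) then s i else 0)
      = ∑ j ∈ Finset.range m, if Even j then s (C - 1 - (j : ZMod n)) else 0 := by
  rw [sum_image_bwd n m hm C]
  refine Finset.sum_congr rfl fun j hj => ?_
  exact if_congr (bwd_cond n j hn C (by have := Finset.mem_range.mp hj; omega)) rfl rfl

lemma bwdG (n : ℕ) [NeZero n] (hn : Odd n) (m : ℕ) (hm : m ≤ n) (C : ZMod n) (s : ZMod n → ℝ) :
    (∑ i ∈ (Finset.range m).image (fun j : ℕ => C - 1 - (j : ZMod n)),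
        if Even ((i - C).val) then 0 else s i)
      = ∑ j ∈ Finset.range m, if Even j then 0 else s (C - 1 - (j : ZMod n)) := by
  rw [sum_image_bwd n m hm C]
  refine Finset.sum_congr rfl fun j hj => ?_
  exact if_congr (bwd_cond n j hn C (by have := Finset.mem_range.mp hj; omega)) rfl rfl

/-- A cut `C` of an odd pizza minimizes `‖R(C)‖` over all cuts if and only if
for every even cyclic interval `I` ending at `C` (on either side), the green
size of `I` is at least its red size. -/
theorem stmt9 (n : ℕ) [NeZero n] (hn : Odd n) (s : ZMod n → ℝ) (hs : ∀ i, 0 ≤ s i)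
    (C : ZMod n) :
    (∀ C' : ZMod n, redSize n s C ≤ redSize n s C') ↔
      (∀ m : ℕ, m < n → Even m → ∀ I : Finset (ZMod n),
        (I = (Finset.range m).image (fun j : ℕ => C + (j : ZMod n)) ∨
         I = (Finset.range m).image (fun j : ℕ => C - 1 - (j : ZMod n))) →
        (∑ i ∈ I, if Even ((i - C).val) then s i else 0) ≤
          ∑ i ∈ I, if Even ((i - C).val) then 0 else s i) := by
  constructor
  · intro hmin m hmn hme I hI
    rcases hI with rfl | rfl
    · rw [fwdR n m hmn.le C s, fwdG n m hmn.le C s]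
      have h1 := keyF n hn s C m hmn hme
      have h2 := hmin (C + (m : ZMod n))
      linarith
    · rw [bwdR n hn m hmn.le C s, bwdG n hn m hmn.le C s]
      have h1 := keyB n hn s C m hmn hme
      have h2 := hmin (C - (m : ZMod n))
      linarith
  · intro h C'
    have hmn : (C' - C).val < n := ZMod.val_lt _
    have hC' : C' = C + (((C' - C).val : ℕ) : ZMod n) := by
      rw [ZMod.natCast_zmod_val]; ring
    by_cases hme : Even ((C' - C).val)
    · have h1 := h _ hmn hme _ (Or.inl rfl)
      rw [fwdR n _ hmn.le C s, fwdG n _ hmn.le C s] at h1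
      have h2 := keyF n hn s C _ hmn hme
      rw [hC']; linarith
    · have hn' := Nat.odd_iff.mp hn
      have hme' : (C' - C).val % 2 = 1 := by
        rcases Nat.mod_two_eq_zero_or_one ((C' - C).val) with h0 | h0
        · exact absurd (Nat.even_iff.mpr h0) hme
        · exact h0
      have hk : n - (C' - C).val < n := by omega
      have hke : Even (n - (C' - C).val) := by
        rw [Nat.even_iff]; omega
      have h1 := h _ hk hke _ (Or.inr rfl)
      rw [bwdR n hn _ hk.le C s, bwdG n hn _ hk.le C s] at h1
      have h2 := keyB n hn s C _ hk hke
      have hC'' : C' = C - ((n - (C' - C).val : ℕ) : ZMod n) := by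
        have he : ((n - (C' - C).val : ℕ) : ZMod n) = -(C' - C) := by
          rw [Nat.cast_sub hmn.le, ZMod.natCast_self, ZMod.natCast_zmod_val]; ring
        rw [he]; ring
      rw [hC'']; linarith
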